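/- Submodularity of sender utility in Binary BP (interval form): define for an interval of types {L,...,H} the value f(L,H) := max over cutoffs i' ∈ {L,...,H} of Σ_{i=L}^{i'} P(τ_i)·(p_i + (1-p_i)·p_{i'}/(1-p_{i'})). Then for any nested intervals [L̂, Ĥ] ⊆ [L̃, H̃] and any common cut point M with L̂ ≤ M < Ĥ, the marginal gain from splitting satisfies f(L̃, M) + f(M+1, H̃) − f(L̃, H̃) ≥ f(L̂, M) + f(M+1, Ĥ) − f(L̂, Ĥ). -/

import Mathlib

/-- The sender's (unnormalized) expected utility from the cutoff-`i'` messaging policy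
against the interval of types `{L, …, i'}`:
`Σ_{i=L}^{i'} P i · (p i + (1 - p i)·p i'/(1 - p i'))`. -/
noncomputable def cutVal (P p : ℕ → ℝ) (L i' : ℕ) : ℝ :=
  ∑ i ∈ Finset.Icc L i', P i * (p i + (1 - p i) * p i' / (1 - p i'))

/-- The sender's optimal expected utility against the interval of types `{L, …, H}`:
the maximum of `cutVal` over cutoffs `i' ∈ {L, …, H}`. -/
noncomputable def fInt (P p : ℕ → ℝ) (L H : ℕ) : ℝ :=
  (Finset.Icc L H).fold max (cutVal P p L L) (cutVal P p L)

lemma fold_max_mem (s : Finset ℕ) (b : ℝ) (f : ℕ → ℝ) :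
    s.fold max b f = b ∨ ∃ x ∈ s, s.fold max b f = f x := by
  induction s using Finset.induction_on with
  | empty => simp
  | insert a s ha ih =>
    rw [Finset.fold_insert ha]
    rcases le_total (f a) (s.fold max b f) with h | h
    · rw [max_eq_right h]
      rcases ih with h' | ⟨x, hx, h'⟩
      · exact Or.inl h'
      · exact Or.inr ⟨x, Finset.mem_insert_of_mem hx, h'⟩
    · exact Or.inr ⟨a, Finset.mem_insert_self a s, max_eq_left h⟩

lemma le_fInt (P p : ℕ → ℝ) {L x H : ℕ} (h1 : L ≤ x) (h2 : x ≤ H) :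
    cutVal P p L x ≤ fInt P p L H :=
  (Finset.le_fold_max _).mpr (Or.inr ⟨x, Finset.mem_Icc.mpr ⟨h1, h2⟩, le_rfl⟩)

lemma fInt_exists (P p : ℕ → ℝ) {L H : ℕ} (h : L ≤ H) :
    ∃ x, L ≤ x ∧ x ≤ H ∧ fInt P p L H = cutVal P p L x := by
  rcases fold_max_mem (Finset.Icc L H) (cutVal P p L L) (cutVal P p L) with h' | ⟨x, hx, h'⟩
  · exact ⟨L, le_rfl, h, h'⟩
  · rw [Finset.mem_Icc] at hx; exact ⟨x, hx.1, hx.2, h'⟩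

lemma cutVal_split (P p : ℕ → ℝ) {L K x : ℕ} (h1 : L ≤ K) (h2 : K ≤ x + 1) :
    cutVal P p L x = (∑ i ∈ Finset.Ico L K, P i * (p i + (1 - p i) * p x / (1 - p x)))
      + cutVal P p K x := by
  unfold cutVal
  simp only [← Finset.Ico_add_one_right_eq_Icc]
  rw [← Finset.sum_Ico_consecutive _ h1 h2]

lemma sum_w_mono (P p : ℕ → ℝ) (hP : ∀ i, 0 ≤ P i) (hp0 : ∀ i, 0 < p i)
    (hp : ∀ i, p i ≤ 1/2) (hdec : ∀ i j, i < j → p j < p i)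
    (s : Finset ℕ) {x y : ℕ} (hxy : x ≤ y) :
    ∑ i ∈ s, P i * (p i + (1 - p i) * p y / (1 - p y)) ≤
    ∑ i ∈ s, P i * (p i + (1 - p i) * p x / (1 - p x)) := by
  apply Finset.sum_le_sum
  intro i _
  have hpx : p y ≤ p x := by
    rcases hxy.lt_or_eq with h | h
    · exact (hdec x y h).le
    · rw [h]
  have h1x : (0:ℝ) < 1 - p x := by have := hp x; linarith
  have h1y : (0:ℝ) < 1 - p y := by have := hp y; linarith
  have h1i : (0:ℝ) ≤ 1 - p i := by have := hp i; linarith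
  apply mul_le_mul_of_nonneg_left _ (hP i)
  apply (add_le_add_iff_left _).mpr
  rw [div_le_div_iff₀ h1y h1x]
  nlinarith [mul_nonneg h1i (by linarith : (0:ℝ) ≤ p x - p y), hp0 x, hp0 y]

/-- Submodularity of sender utility in Binary BP (interval form): for nested intervals
`[Lh, Hh] ⊆ [Lt, Ht]` and a common cut point `M` with `Lh ≤ M < Hh`, the marginal gain
from splitting at `M` is weakly larger on the larger interval:
`f(Lt,M) + f(M+1,Ht) − f(Lt,Ht) ≥ f(Lh,M) + f(M+1,Hh) − f(Lh,Hh)`.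
Types are ordered so that the priors `p i ∈ (0,1/2]` are strictly decreasing, and the
type weights `P i` are nonnegative. -/
theorem stmt12 (P p : ℕ → ℝ) (hP : ∀ i, 0 ≤ P i) (hp0 : ∀ i, 0 < p i)
    (hp : ∀ i, p i ≤ 1/2) (hdec : ∀ i j, i < j → p j < p i)
    (Lt Lh M Hh Ht : ℕ) (h1 : Lt ≤ Lh) (h2 : Lh ≤ M) (h3 : M < Hh) (h4 : Hh ≤ Ht) :
    fInt P p Lh M + fInt P p (M+1) Hh - fInt P p Lh Hh ≤
      fInt P p Lt M + fInt P p (M+1) Ht - fInt P p Lt Ht := by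
  have hLtM : Lt ≤ M := h1.trans h2
  have hM1Hh : M + 1 ≤ Hh := h3
  obtain ⟨k, hk1, hk2, hkE⟩ := fInt_exists P p h2
  obtain ⟨j, hj1, hj2, hjE⟩ := fInt_exists P p hM1Hh
  obtain ⟨i, hi1, hi2, hiE⟩ := fInt_exists P p (hLtM.trans (h3.le.trans h4))
  rcases le_or_gt i M with hiM | hiM
  · -- maximizer of the big interval lies at or below M
    have hA : cutVal P p Lt i ≤ fInt P p Lt M := le_fInt P p hi1 hiM
    have hB : cutVal P p (M+1) j ≤ fInt P p (M+1) Ht := le_fInt P p hj1 (hj2.trans h4)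
    have hC : cutVal P p Lh k ≤ fInt P p Lh Hh := le_fInt P p hk1 (hk2.trans h3.le)
    linarith
  · have hi1' : M + 1 ≤ i := hiM
    rcases le_or_gt j i with hji | hji
    · -- maximizer above M, and j ≤ i
      have e1 : cutVal P p Lt k = (∑ t ∈ Finset.Ico Lt Lh,
            P t * (p t + (1 - p t) * p k / (1 - p k))) + cutVal P p Lh k :=
        cutVal_split P p h1 (hk1.trans (Nat.le_succ k))
      have e2 : cutVal P p Lt i = (∑ t ∈ Finset.Ico Lt Lh,
            P t * (p t + (1 - p t) * p i / (1 - p i))) + cutVal P p Lh i :=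
        cutVal_split P p h1 (by omega)
      have e3 : cutVal P p Lh i = (∑ t ∈ Finset.Ico Lh (M+1),
            P t * (p t + (1 - p t) * p i / (1 - p i))) + cutVal P p (M+1) i :=
        cutVal_split P p (by omega) (by omega)
      have e4 : cutVal P p Lh j = (∑ t ∈ Finset.Ico Lh (M+1),
            P t * (p t + (1 - p t) * p j / (1 - p j))) + cutVal P p (M+1) j :=
        cutVal_split P p (by omega) (by omega)
      have m1 := sum_w_mono P p hP hp0 hp hdec (Finset.Ico Lt Lh)
        (show k ≤ i by omega)
      have m2 := sum_w_mono P p hP hp0 hp hdec (Finset.Ico Lh (M+1)) hji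
      have hA : cutVal P p Lt k ≤ fInt P p Lt M := le_fInt P p (h1.trans hk1) hk2
      have hB : cutVal P p (M+1) i ≤ fInt P p (M+1) Ht := le_fInt P p hi1' hi2
      have hC : cutVal P p Lh j ≤ fInt P p Lh Hh := le_fInt P p (by omega) hj2
      linarith
    · -- maximizer above M, and i < j
      have e1 : cutVal P p Lt k = (∑ t ∈ Finset.Ico Lt Lh,
            P t * (p t + (1 - p t) * p k / (1 - p k))) + cutVal P p Lh k :=
        cutVal_split P p h1 (hk1.trans (Nat.le_succ k))
      have e2 : cutVal P p Lt i = (∑ t ∈ Finset.Ico Lt Lh,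
            P t * (p t + (1 - p t) * p i / (1 - p i))) + cutVal P p Lh i :=
        cutVal_split P p h1 (by omega)
      have m1 := sum_w_mono P p hP hp0 hp hdec (Finset.Ico Lt Lh)
        (show k ≤ i by omega)
      have hA : cutVal P p Lt k ≤ fInt P p Lt M := le_fInt P p (h1.trans hk1) hk2
      have hB : cutVal P p (M+1) j ≤ fInt P p (M+1) Ht := le_fInt P p hj1 (hj2.trans h4)
      have hC : cutVal P p Lh i ≤ fInt P p Lh Hh := le_fInt P p (by omega) (by omega)
      linarith
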